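/- Let (M,d) be a metric space and X a Banach space. Let α ≥ 0 and let φ : M ⇉ X be a correspondence that is non-empty-valued, closed-valued, and convex-valued, and that admits local strongly pointwise α-Lipschitz selections. If φ has a bounded continuous selection, then for every β > α there exist a bounded continuous selection f : M → X of φ and a set B ⊆ M that is dense in M such that f is pointwise β-Lipschitz at every point of B. -/

import Mathlib

open Filter Metric Set

/-- `f` is pointwise `α`-Lipschitz at `b`:
`limsup_{r→0⁺} ( r⁻¹ · sup { d(f b, f a) : a ∈ closedBall b r } ) ≤ α`. -/
noncomputable def PtwiseLipschitzAt {M X : Type*} [PseudoMetricSpace M] [PseudoMetricSpace X]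
    (f : M → X) (α : ℝ) (b : M) : Prop :=
  Filter.limsup
    (fun r : ℝ => (ENNReal.ofReal r)⁻¹ * ⨆ a ∈ Metric.closedBall b r, edist (f b) (f a))
    (nhdsWithin 0 (Set.Ioi 0)) ≤ ENNReal.ofReal α

/-- `φ` admits local strongly pointwise `α`-Lipschitz selections. -/
def AdmitsLocalStronglyPtwiseLipschitzSelections {M X : Type*} [MetricSpace M]
    [NormedAddCommGroup X] (φ : M → Set X) (α : ℝ) : Prop :=
  ∀ b : M, ∀ y ∈ φ b, ∃ U : Set M, IsOpen U ∧ b ∈ U ∧ ∃ f : M → X,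
    Continuous f ∧ (∀ a, f a ∈ φ a) ∧ f b = y ∧ ∀ a ∈ U, ‖f b - f a‖ ≤ α * dist b a

set_option maxHeartbeats 1000000 in
lemma stageStep {M X : Type*} [MetricSpace M] [NormedAddCommGroup X] [NormedSpace ℝ X]
    {α : ℝ} (hα : 0 ≤ α) {φ : M → Set X} (hcv : ∀ a, Convex ℝ (φ a))
    (hloc : AdmitsLocalStronglyPtwiseLipschitzSelections φ α)
    (f : M → X) (hf : Continuous f) (hfs : ∀ a, f a ∈ φ a)
    (E : Set M) {δ c : ℝ} (hδ : 0 < δ) (hδ1 : δ ≤ 1) (hc : 0 < c) :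
    ∃ (f' : M → X) (N : Set M),
      Continuous f' ∧ (∀ a, f' a ∈ φ a) ∧
      (∀ a, ‖f' a - f a‖ ≤ δ) ∧
      (∀ e ∈ E, ∀ a, ‖f' a - f a‖ ≤ c * dist a e) ∧
      (∀ b ∈ N, f' b = f b ∧ ∃ ρ > 0, ∀ a ∈ closedBall b ρ, ‖f' a - f' b‖ ≤ α * dist a b) ∧
      (∀ x, x ∉ closure E → ∃ b ∈ N, dist x b ≤ 2 * δ) := by
  classical
  set Good : Set (M × ℝ × (M → X)) :=
    {t | 0 < t.2.1 ∧ t.2.1 ≤ δ ∧ Continuous t.2.2 ∧ (∀ a, t.2.2 a ∈ φ a) ∧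
      t.2.2 t.1 = f t.1 ∧
      (∀ a ∈ closedBall t.1 t.2.1, ‖t.2.2 t.1 - t.2.2 a‖ ≤ α * dist t.1 a) ∧
      (∀ a ∈ closedBall t.1 t.2.1, ‖t.2.2 a - f a‖ ≤ δ) ∧
      (∀ e ∈ E, t.2.1 ≤ dist t.1 e / 2 ∧
        ∀ a ∈ closedBall t.1 t.2.1, ‖t.2.2 a - f a‖ ≤ c * (dist t.1 e - t.2.1))} with hGoodDef
  -- existence of an admissible tuple at any point away from closure E
  have exGood : ∀ x, x ∉ closure E → ∃ t, t ∈ Good ∧ t.1 = x := by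
    intro x hx
    obtain ⟨U, hUo, hxU, h, hhc, hhs, hhx, hlip⟩ := hloc x (f x) (hfs x)
    obtain ⟨s, hs0, hsE⟩ : ∃ s > 0, ∀ e ∈ E, s ≤ dist x e := by
      rcases E.eq_empty_or_nonempty with hE | hE
      · exact ⟨1, one_pos, by simp [hE]⟩
      · refine ⟨infDist x E, ?_, fun e he => infDist_le_dist_of_mem he⟩
        rw [← Metric.infDist_closure]
        exact (isClosed_closure.notMem_iff_infDist_pos hE.closure).mp hx
    set μ := min δ (c * s / 2) with hμdef
    have hμ0 : 0 < μ := lt_min hδ (by positivity)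
    have htend : Tendsto (fun a => ‖h a - f a‖) (nhds x) (nhds 0) := by
      have : ContinuousAt (fun a => ‖h a - f a‖) x := ((hhc.sub hf).norm).continuousAt
      simpa [ContinuousAt, hhx, sub_self, norm_zero] using this
    have hev : ∀ᶠ a in nhds x, ‖h a - f a‖ < μ := htend.eventually_lt_const hμ0
    obtain ⟨τ, hτ0, hτ⟩ := Metric.mem_nhds_iff.mp (Filter.inter_mem hev (hUo.mem_nhds hxU))
    set ρ := min (τ/2) (min δ (s/2)) with hρdef
    have hρ0 : 0 < ρ := by positivity
    have hρτ : closedBall x ρ ⊆ ball x τ := by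
      apply closedBall_subset_ball
      calc ρ ≤ τ/2 := min_le_left _ _
        _ < τ := by linarith
    have hsub : ∀ a ∈ closedBall x ρ, ‖h a - f a‖ < μ ∧ a ∈ U := fun a ha => hτ (hρτ ha)
    refine ⟨(x, ρ, h), ⟨hρ0, le_trans (le_trans (min_le_right _ _) (min_le_left _ _)) le_rfl,
      hhc, hhs, hhx, ?_, ?_, ?_⟩, rfl⟩
    · intro a ha
      simpa [hhx] using hlip a (hsub a ha).2
    · intro a ha
      exact le_trans (hsub a ha).1.le (min_le_left _ _)
    · intro e he
      have hse : s ≤ dist x e := hsE e he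
      constructor
      · calc ρ ≤ s/2 := le_trans (min_le_right _ _) (min_le_right _ _)
          _ ≤ dist x e / 2 := by linarith
      · intro a ha
        have h1 : ‖h a - f a‖ ≤ c * s / 2 := le_trans (hsub a ha).1.le (min_le_right _ _)
        have h2 : ρ ≤ s/2 := le_trans (min_le_right _ _) (min_le_right _ _)
        calc ‖h a - f a‖ ≤ c * s / 2 := h1
          _ = c * (s - s/2) := by ring
          _ ≤ c * (dist x e - ρ) := by
              apply mul_le_mul_of_nonneg_left _ hc.le
              linarith
  -- Zorn's lemma: maximal disjoint family of admissible tuples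
  set Fam : Set (Set (M × ℝ × (M → X))) :=
    {T | T ⊆ Good ∧ T.Pairwise fun t t' =>
      Disjoint (closedBall t.1 t.2.1) (closedBall t'.1 t'.2.1)} with hFamDef
  obtain ⟨T, hTmax⟩ : ∃ T, Maximal (· ∈ Fam) T := by
    apply zorn_subset
    intro ch hch hchain
    refine ⟨⋃₀ ch, ⟨?_, ?_⟩, fun s hs => subset_sUnion_of_mem hs⟩
    · rintro t ⟨s, hs, hts⟩
      exact (hch hs).1 hts
    · rintro t ⟨s, hs, hts⟩ t' ⟨s', hs', hts'⟩ hne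
      rcases hchain.total hs hs' with hss | hss
      · exact (hch hs').2 (hss hts) hts' hne
      · exact (hch hs).2 hts (hss hts') hne
  have hTG : T ⊆ Good := hTmax.1.1
  have hTd : T.Pairwise fun t t' =>
      Disjoint (closedBall t.1 t.2.1) (closedBall t'.1 t'.2.1) := hTmax.1.2
  have huniq : ∀ t ∈ T, ∀ t' ∈ T, ∀ a, a ∈ closedBall t.1 t.2.1 →
      a ∈ closedBall t'.1 t'.2.1 → t = t' := by
    intro t ht t' ht' a ha ha'
    by_contra hne
    exact Set.disjoint_left.mp (hTd ht ht' hne) ha ha'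
  -- the bump functions
  set u : (M × ℝ × (M → X)) → M → ℝ :=
    fun t a => max 0 (min 1 (2 - 2 * dist a t.1 / t.2.1)) with hudef
  have hu0 : ∀ t a, 0 ≤ u t a := fun t a => le_max_left _ _
  have hu1 : ∀ t a, u t a ≤ 1 := fun t a => max_le (by norm_num) (min_le_left _ _)
  have hufull : ∀ t : M × ℝ × (M → X), 0 < t.2.1 → ∀ a, dist a t.1 ≤ t.2.1/2 → u t a = 1 := by
    intro t ht a ha
    have h2 : 2 * dist a t.1 / t.2.1 ≤ 1 := by
      rw [div_le_one ht]; linarith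
    have h1 : (1:ℝ) ≤ 2 - 2 * dist a t.1 / t.2.1 := by linarith
    simp only [hudef]
    rw [min_eq_left h1, max_eq_right (by norm_num : (0:ℝ) ≤ 1)]
  have huzero : ∀ t : M × ℝ × (M → X), 0 < t.2.1 → ∀ a, t.2.1 ≤ dist a t.1 → u t a = 0 := by
    intro t ht a ha
    have h2 : (2:ℝ) ≤ 2 * dist a t.1 / t.2.1 := by
      rw [le_div_iff₀ ht]; nlinarith
    have h1 : min 1 (2 - 2 * dist a t.1 / t.2.1) ≤ 0 := le_trans (min_le_right _ _) (by linarith)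
    simp only [hudef]
    exact max_eq_left h1
  have hub : ∀ t : M × ℝ × (M → X), 0 < t.2.1 → ∀ a x : M, t.2.1 ≤ dist x t.1 →
      u t a ≤ 2 * dist a x / t.2.1 := by
    intro t ht a x hx
    have htri : dist x t.1 ≤ dist x a + dist a t.1 := dist_triangle _ _ _
    have hXle : 2 - 2 * dist a t.1 / t.2.1 ≤ 2 * dist a x / t.2.1 := by
      rw [sub_le_iff_le_add, ← add_div, le_div_iff₀ ht]
      have hcomm : dist x a = dist a x := dist_comm x a
      nlinarith
    calc u t a ≤ max 0 (2 - 2 * dist a t.1 / t.2.1) :=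
          max_le_max le_rfl (min_le_right _ _)
      _ ≤ 2 * dist a x / t.2.1 := max_le (by positivity) hXle
  have hucont : ∀ t : M × ℝ × (M → X), Continuous (u t) := by
    intro t
    apply continuous_const.max
    apply continuous_const.min
    exact continuous_const.sub ((continuous_const.mul
      (continuous_id.dist continuous_const)).div_const _)
  -- the new selection
  set F : M → X := fun a =>
    if hx : ∃ t, t ∈ T ∧ a ∈ ball t.1 t.2.1 then
      f a + u hx.choose a • (hx.choose.2.2 a - f a)
    else f a with hFdef
  have key : ∀ t ∈ T, ∀ a ∈ closedBall t.1 t.2.1,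
      F a = f a + u t a • (t.2.2 a - f a) := by
    intro t ht a ha
    by_cases hao : a ∈ ball t.1 t.2.1
    · have hx : ∃ t, t ∈ T ∧ a ∈ ball t.1 t.2.1 := ⟨t, ht, hao⟩
      have hspec := hx.choose_spec
      have heq : hx.choose = t :=
        huniq _ hspec.1 t ht a (ball_subset_closedBall hspec.2) ha
      simp only [hFdef]
      rw [dif_pos hx, heq]
    · have hx : ¬ ∃ t, t ∈ T ∧ a ∈ ball t.1 t.2.1 := by
        rintro ⟨t', ht', ha'⟩
        have heq := huniq t' ht' t ht a (ball_subset_closedBall ha') ha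
        exact hao (heq ▸ ha')
      have hua : u t a = 0 :=
        huzero t (hTG ht).1 a (by simpa [mem_ball, not_lt] using hao)
      simp only [hFdef]
      rw [dif_neg hx, hua, zero_smul, add_zero]
  have keyout : ∀ a, (∀ t ∈ T, a ∉ ball t.1 t.2.1) → F a = f a := by
    intro a ha
    have hx : ¬ ∃ t, t ∈ T ∧ a ∈ ball t.1 t.2.1 := by
      rintro ⟨t, ht, h⟩; exact ha t ht h
    simp only [hFdef]
    rw [dif_neg hx]
  have hpw : ∀ a, F a = f a ∨ ∃ t ∈ T, a ∈ ball t.1 t.2.1 ∧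
      F a = f a + u t a • (t.2.2 a - f a) := by
    intro a
    by_cases hx : ∃ t, t ∈ T ∧ a ∈ ball t.1 t.2.1
    · exact Or.inr ⟨hx.choose, hx.choose_spec.1, hx.choose_spec.2,
        key _ hx.choose_spec.1 _ (ball_subset_closedBall hx.choose_spec.2)⟩
    · exact Or.inl (keyout a fun t ht h => hx ⟨t, ht, h⟩)
  clear_value u F
  -- basic bounds
  have hnormu : ∀ (t : M × ℝ × (M → X)) a, ‖F a - f a‖ = u t a * ‖t.2.2 a - f a‖ →
      True := fun _ _ _ => trivial
  have hbδ : ∀ a, ‖F a - f a‖ ≤ δ := by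
    intro a
    rcases hpw a with h | ⟨t, ht, hab, h⟩
    · rw [h, sub_self, norm_zero]; exact hδ.le
    · rw [h, add_sub_cancel_left, norm_smul, Real.norm_of_nonneg (hu0 t a)]
      have h1 : ‖t.2.2 a - f a‖ ≤ δ :=
        (hTG ht).2.2.2.2.2.2.1 a (ball_subset_closedBall hab)
      calc u t a * ‖t.2.2 a - f a‖ ≤ 1 * δ :=
            mul_le_mul (hu1 t a) h1 (norm_nonneg _) one_pos.le
        _ = δ := one_mul _
  have hbE : ∀ e ∈ E, ∀ a, ‖F a - f a‖ ≤ c * dist a e := by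
    intro e he a
    rcases hpw a with h | ⟨t, ht, hab, h⟩
    · rw [h, sub_self, norm_zero]; positivity
    · rw [h, add_sub_cancel_left, norm_smul, Real.norm_of_nonneg (hu0 t a)]
      obtain ⟨hρE, hclose⟩ := (hTG ht).2.2.2.2.2.2.2 e he
      have h1 : ‖t.2.2 a - f a‖ ≤ c * (dist t.1 e - t.2.1) :=
        hclose a (ball_subset_closedBall hab)
      have htri : dist t.1 e ≤ dist t.1 a + dist a e := dist_triangle _ _ _
      have hd : dist t.1 a < t.2.1 := by
        rw [dist_comm]; exact mem_ball.mp hab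
      calc u t a * ‖t.2.2 a - f a‖ ≤ 1 * (c * (dist t.1 e - t.2.1)) :=
            mul_le_mul (hu1 t a) h1 (norm_nonneg _) one_pos.le
        _ = c * (dist t.1 e - t.2.1) := one_mul _
        _ ≤ c * dist a e := by
            apply mul_le_mul_of_nonneg_left _ hc.le
            linarith
  have hsel' : ∀ a, F a ∈ φ a := by
    intro a
    rcases hpw a with h | ⟨t, ht, hab, h⟩
    · rw [h]; exact hfs a
    · have halg : f a + u t a • (t.2.2 a - f a)
          = (1 - u t a) • f a + u t a • t.2.2 a := by
        rw [smul_sub, sub_smul, one_smul]; abel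
      rw [h, halg]
      exact hcv a (hfs a) ((hTG ht).2.2.2.1 a) (by linarith [hu1 t a]) (hu0 t a) (by ring)
  -- new centres
  set N : Set M := Prod.fst '' T with hNdef
  have hnew : ∀ b ∈ N, F b = f b ∧ ∃ ρ > 0, ∀ a ∈ closedBall b ρ,
      ‖F a - F b‖ ≤ α * dist a b := by
    rintro b ⟨t, ht, rfl⟩
    obtain ⟨hρ0, hρδ, hhc, hhsel, hhb, hlip, hclose, _⟩ := hTG ht
    have hFb : F t.1 = f t.1 := by
      rw [key t ht t.1 (mem_closedBall_self hρ0.le), hhb, sub_self, smul_zero, add_zero]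
    refine ⟨hFb, t.2.1/2, by positivity, fun a ha => ?_⟩
    have ha' : a ∈ closedBall t.1 t.2.1 :=
      closedBall_subset_closedBall (by linarith) ha
    have hFa : F a = t.2.2 a := by
      rw [key t ht a ha', hufull t hρ0 a (mem_closedBall.mp ha), one_smul]
      abel
    rw [hFa, hFb, ← hhb]
    calc ‖t.2.2 a - t.2.2 t.1‖ = ‖t.2.2 t.1 - t.2.2 a‖ := norm_sub_rev _ _
      _ ≤ α * dist t.1 a := hlip a ha'
      _ = α * dist a t.1 := by rw [dist_comm]
  -- maximality gives density of new centres
  have hmaxdense : ∀ x, x ∉ closure E → ∃ b ∈ N, dist x b ≤ 2 * δ := by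
    intro x hx
    obtain ⟨t₀, ht₀G, ht₀1⟩ := exGood x hx
    by_cases ht₀T : t₀ ∈ T
    · exact ⟨x, ⟨t₀, ht₀T, ht₀1⟩, by simp; positivity⟩
    by_cases hdisj : ∀ t ∈ T, Disjoint (closedBall t.1 t.2.1) (closedBall t₀.1 t₀.2.1)
    · exfalso
      have hins : insert t₀ T ∈ Fam := by
        constructor
        · exact insert_subset ht₀G hTG
        · exact hTd.insert fun t ht hne => ⟨(hdisj t ht).symm, hdisj t ht⟩
      have := hTmax.2 hins (subset_insert _ _)
      exact ht₀T (this (mem_insert _ _))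
    · push_neg at hdisj
      obtain ⟨t, ht, hnd⟩ := hdisj
      obtain ⟨y, hy1, hy2⟩ := Set.not_disjoint_iff.mp hnd
      refine ⟨t.1, ⟨t, ht, rfl⟩, ?_⟩
      have h1 : dist y t.1 ≤ t.2.1 := mem_closedBall.mp hy1
      have h2 : dist y t₀.1 ≤ t₀.2.1 := mem_closedBall.mp hy2
      have h3 : t.2.1 ≤ δ := (hTG ht).2.1
      have h4 : t₀.2.1 ≤ δ := ht₀G.2.1
      calc dist x t.1 ≤ dist x y + dist y t.1 := dist_triangle _ _ _
        _ = dist y t₀.1 + dist y t.1 := by rw [← ht₀1, dist_comm]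
        _ ≤ 2 * δ := by linarith
  -- continuity of F
  have hFc : Continuous F := by
    rw [continuous_iff_continuousAt]
    intro x
    by_cases hx : ∃ t, t ∈ T ∧ x ∈ ball t.1 t.2.1
    · -- interior of some ball : locally equal to an explicit continuous blend
      obtain ⟨t, ht, hxt⟩ := hx
      obtain ⟨hρ0, _, hhc, _, _, _, _, _⟩ := hTG ht
      have hg : Continuous fun a => f a + u t a • (t.2.2 a - f a) :=
        hf.add ((hucont t).smul (hhc.sub hf))
      have hr : 0 < t.2.1 - dist x t.1 := by
        have := mem_ball.mp hxt; linarith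
      refine ContinuousAt.congr hg.continuousAt ?_
      refine Filter.eventuallyEq_of_mem (ball_mem_nhds x hr) fun a ha => ?_
      have ha' : a ∈ closedBall t.1 t.2.1 := by
        rw [mem_closedBall]
        have h1 : dist a x < t.2.1 - dist x t.1 := mem_ball.mp ha
        calc dist a t.1 ≤ dist a x + dist x t.1 := dist_triangle _ _ _
          _ ≤ t.2.1 := by linarith
      exact (key t ht a ha').symm
    · -- not in the interior of any ball
      push_neg at hx
      have hxout : ∀ t ∈ T, t.2.1 ≤ dist x t.1 := by
        intro t ht
        have := hx t ht
        simpa [mem_ball, not_lt] using this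
      have hFx : F x = f x := by
        by_cases hxc : ∃ t, t ∈ T ∧ x ∈ closedBall t.1 t.2.1
        · obtain ⟨t, ht, hxt⟩ := hxc
          rw [key t ht x hxt, huzero t (hTG ht).1 x (hxout t ht), zero_smul, add_zero]
        · exact keyout x fun t ht h => hx t ht h
      rw [Metric.continuousAt_iff]
      intro η hη
      obtain ⟨θ, hθ0, hθ⟩ : ∃ θ > 0, ∀ y, dist y x ≤ θ → ‖f y - f x‖ ≤ η/8 := by
        obtain ⟨θ, hθ0, hθ⟩ := Metric.continuousAt_iff.mp hf.continuousAt (η/8) (by positivity)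
        refine ⟨θ/2, by positivity, fun y hy => ?_⟩
        have := hθ (show dist y x < θ by linarith)
        rw [dist_eq_norm] at this
        exact this.le
      refine ⟨min (θ/2) (min (η/(8*(α+1))) (η*θ/8)), by positivity, fun a ha => ?_⟩
      have hd1 : dist a x ≤ θ/2 := le_trans ha.le (min_le_left _ _)
      have hd2 : dist a x ≤ η/(8*(α+1)) :=
        le_trans ha.le (le_trans (min_le_right _ _) (min_le_left _ _))
      have hd3 : dist a x ≤ η*θ/8 :=
        le_trans ha.le (le_trans (min_le_right _ _) (min_le_right _ _))
      have haf : ‖f a - f x‖ ≤ η/8 := hθ a (by linarith)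
      have hMain : ‖F a - f a‖ ≤ 3*η/4 := by
        rcases hpw a with h | ⟨t, ht, hab, h⟩
        · rw [h, sub_self, norm_zero]; positivity
        · obtain ⟨hρ0, hρδ, hhc, hhsel, hhb, hlip, hclose, _⟩ := hTG ht
          rw [h, add_sub_cancel_left, norm_smul, Real.norm_of_nonneg (hu0 t a)]
          have hd : dist a t.1 < t.2.1 := mem_ball.mp hab
          have hxo : t.2.1 ≤ dist x t.1 := hxout t ht
          have hub2 : u t a ≤ 2 * dist a x / t.2.1 := hub t hρ0 a x hxo
          have hnorm2 : ‖t.2.2 a - f a‖ ≤ 1 :=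
            le_trans (hclose a (ball_subset_closedBall hab)) hδ1
          by_cases hcase : t.2.1 ≤ θ/2
          · -- small ball : f barely oscillates on it
            have hbx : dist t.1 x ≤ θ := by
              calc dist t.1 x ≤ dist t.1 a + dist a x := dist_triangle _ _ _
                _ ≤ t.2.1 + θ/2 := by
                    have : dist t.1 a = dist a t.1 := dist_comm _ _
                    linarith
                _ ≤ θ := by linarith
            have hfta : ‖f t.1 - f a‖ ≤ η/4 := by
              have e1 : ‖f t.1 - f x‖ ≤ η/8 := hθ t.1 hbx
              calc ‖f t.1 - f a‖ = ‖(f t.1 - f x) - (f a - f x)‖ := by abel_nf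
                _ ≤ ‖f t.1 - f x‖ + ‖f a - f x‖ := norm_sub_le _ _
                _ ≤ η/8 + η/8 := add_le_add e1 haf
                _ = η/4 := by ring
            have e2 : ‖f t.1 - t.2.2 a‖ ≤ α * t.2.1 := by
              have e3 := hlip a (ball_subset_closedBall hab)
              rw [hhb] at e3
              have e4 : dist t.1 a = dist a t.1 := dist_comm _ _
              nlinarith
            have hnorm1 : ‖t.2.2 a - f a‖ ≤ α * t.2.1 + η/4 := by
              have heq : t.2.2 a - f a = (f t.1 - f a) - (f t.1 - t.2.2 a) := by abel
              have e5 := norm_sub_le (f t.1 - f a) (f t.1 - t.2.2 a)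
              rw [← heq] at e5
              linarith
            have step1 : u t a * ‖t.2.2 a - f a‖
                ≤ (2 * dist a x / t.2.1) * (α * t.2.1) + 1 * (η/4) := by
              calc u t a * ‖t.2.2 a - f a‖ ≤ u t a * (α * t.2.1 + η/4) :=
                    mul_le_mul_of_nonneg_left hnorm1 (hu0 t a)
                _ = u t a * (α * t.2.1) + u t a * (η/4) := by ring
                _ ≤ (2 * dist a x / t.2.1) * (α * t.2.1) + 1 * (η/4) := by
                    apply add_le_add
                    · exact mul_le_mul_of_nonneg_right hub2 (by positivity)
                    · exact mul_le_mul_of_nonneg_right (hu1 t a) (by positivity)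
            have step2 : (2 * dist a x / t.2.1) * (α * t.2.1) = 2 * α * dist a x := by
              field_simp
            have step3 : 2 * α * dist a x ≤ η/4 := by
              have h1 : 2 * α * dist a x ≤ 2 * α * (η/(8*(α+1))) := by
                apply mul_le_mul_of_nonneg_left hd2 (by positivity)
              have h2 : 2 * α * (η/(8*(α+1))) ≤ η/4 := by
                rw [← mul_div_assoc]
                rw [div_le_div_iff₀ (by positivity : (0:ℝ) < 8*(α+1)) (by norm_num : (0:ℝ) < 4)]
                nlinarith
              linarith
            rw [step2] at step1
            linarith
          · -- large ball : the bump is tiny near x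
            push_neg at hcase
            have h1 : u t a * ‖t.2.2 a - f a‖ ≤ (2 * dist a x / t.2.1) * 1 :=
              mul_le_mul hub2 hnorm2 (norm_nonneg _) (by positivity)
            have h2 : 2 * dist a x / t.2.1 ≤ η/2 := by
              rw [div_le_iff₀ hρ0]
              nlinarith
            linarith
      calc dist (F a) (F x) = ‖(F a - f a) + (f a - f x)‖ := by
            rw [dist_eq_norm, hFx]; congr 1; abel
        _ ≤ ‖F a - f a‖ + ‖f a - f x‖ := norm_add_le _ _
        _ ≤ 3*η/4 + η/8 := add_le_add hMain haf
        _ < η := by linarith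
  exact ⟨F, N, hFc, hsel', hbδ, hbE, hnew, hmaxdense⟩

set_option maxHeartbeats 1000000 in
/-- **Pointwise Lipschitz Selection Theorem, bounded version.** -/
theorem stmt1 {M X : Type*} [MetricSpace M] [NormedAddCommGroup X] [NormedSpace ℝ X]
    [CompleteSpace X] (α : ℝ) (hα : 0 ≤ α) (φ : M → Set X)
    (hne : ∀ a, (φ a).Nonempty) (hcl : ∀ a, IsClosed (φ a)) (hcv : ∀ a, Convex ℝ (φ a))
    (hloc : AdmitsLocalStronglyPtwiseLipschitzSelections φ α)
    (hsel : ∃ g : M → X, Continuous g ∧ (∀ a, g a ∈ φ a) ∧ Bornology.IsBounded (Set.range g))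
    (β : ℝ) (hβ : α < β) :
    ∃ f : M → X, Continuous f ∧ (∀ a, f a ∈ φ a) ∧ Bornology.IsBounded (Set.range f) ∧
      ∃ B : Set M, Dense B ∧ ∀ b ∈ B, PtwiseLipschitzAt f β b := by
  classical
  obtain ⟨g, hg, hgs, hgb⟩ := hsel
  have hβ0 : 0 ≤ β := le_of_lt (lt_of_le_of_lt hα hβ)
  set γ := β - α with hγdef
  have hγ0 : 0 < γ := sub_pos.mpr hβ
  -- one construction step, packaged for recursion
  have step' : ∀ (m : ℕ) (p : {p : (M → X) × Set M // Continuous p.1 ∧ ∀ a, p.1 a ∈ φ a}),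
      ∃ q : {p : (M → X) × Set M // Continuous p.1 ∧ ∀ a, p.1 a ∈ φ a},
        ∃ N : Set M, q.1.2 = p.1.2 ∪ N ∧
          (∀ a, ‖q.1.1 a - p.1.1 a‖ ≤ (2:ℝ)⁻¹ ^ m) ∧
          (∀ e ∈ p.1.2, ∀ a, ‖q.1.1 a - p.1.1 a‖ ≤ (γ/2 * (2:ℝ)⁻¹ ^ m) * dist a e) ∧
          (∀ b ∈ N, q.1.1 b = p.1.1 b ∧
            ∃ ρ > 0, ∀ a ∈ closedBall b ρ, ‖q.1.1 a - q.1.1 b‖ ≤ α * dist a b) ∧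
          (∀ x, x ∉ closure p.1.2 → ∃ b ∈ N, dist x b ≤ 2 * (2:ℝ)⁻¹ ^ m) := by
    intro m p
    obtain ⟨f', N, h1, h2, h3, h4, h5, h6⟩ := stageStep hα hcv hloc p.1.1 p.2.1 p.2.2 p.1.2
      (δ := (2:ℝ)⁻¹ ^ m) (c := γ/2 * (2:ℝ)⁻¹ ^ m) (by positivity)
      (pow_le_one₀ (by norm_num) (by norm_num)) (by positivity)
    exact ⟨⟨(f', p.1.2 ∪ N), h1, h2⟩, N, rfl, h3, h4, h5, h6⟩
  choose nxt hnxt using step'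
  set seq : ℕ → {p : (M → X) × Set M // Continuous p.1 ∧ ∀ a, p.1 a ∈ φ a} :=
    fun m => Nat.rec ⟨(g, ∅), hg, hgs⟩ (fun k ih => nxt k ih) m with hseqdef
  set fm : ℕ → M → X := fun m => (seq m).1.1 with hfmdef
  set Em : ℕ → Set M := fun m => (seq m).1.2 with hEmdef
  have hseqsucc : ∀ m, seq (m+1) = nxt m (seq m) := fun m => rfl
  have hstep : ∀ m, ∃ N : Set M, Em (m+1) = Em m ∪ N ∧
      (∀ a, ‖fm (m+1) a - fm m a‖ ≤ (2:ℝ)⁻¹ ^ m) ∧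
      (∀ e ∈ Em m, ∀ a, ‖fm (m+1) a - fm m a‖ ≤ (γ/2 * (2:ℝ)⁻¹ ^ m) * dist a e) ∧
      (∀ b ∈ N, fm (m+1) b = fm m b ∧
        ∃ ρ > 0, ∀ a ∈ closedBall b ρ, ‖fm (m+1) a - fm (m+1) b‖ ≤ α * dist a b) ∧
      (∀ x, x ∉ closure (Em m) → ∃ b ∈ N, dist x b ≤ 2 * (2:ℝ)⁻¹ ^ m) := by
    intro m
    have := hnxt m (seq m)
    rw [← hseqsucc m] at this
    exact this
  choose Nm hEmsucc hb1 hb2 hbnew hbdense using hstep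
  have hEm0 : Em 0 = ∅ := rfl
  have hEmmono : ∀ m k, m ≤ k → Em m ⊆ Em k := by
    intro m k hmk
    induction k with
    | zero => rw [Nat.le_zero] at hmk; subst hmk; exact subset_rfl
    | succ k ih =>
        rcases Nat.lt_or_ge m (k+1) with h | h
        · refine subset_trans (ih (Nat.lt_succ_iff.mp h)) ?_
          rw [hEmsucc k]; exact subset_union_left
        · have : m = k + 1 := le_antisymm hmk h
          subst this; exact subset_rfl
  -- convergence
  have hdist : ∀ a m, dist (fm m a) (fm (m+1) a) ≤ 1 * (2:ℝ)⁻¹ ^ m := by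
    intro a m
    rw [one_mul, dist_eq_norm, norm_sub_rev]
    exact hb1 m a
  have hcau : ∀ a, CauchySeq fun m => fm m a := fun a =>
    cauchySeq_of_le_geometric 2⁻¹ 1 (by norm_num) (hdist a)
  have hlim : ∀ a, ∃ y, Tendsto (fun m => fm m a) atTop (nhds y) := by
    intro a
    obtain ⟨y, hy⟩ := cauchySeq_tendsto_of_complete (hcau a)
    exact ⟨y, hy⟩
  choose flim hflim using hlim
  have htail : ∀ m a, dist (fm m a) (flim a) ≤ 2 * (2:ℝ)⁻¹ ^ m := by
    intro m a
    have := dist_le_of_le_geometric_of_tendsto 2⁻¹ 1 (by norm_num) (hdist a) (hflim a) m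
    calc dist (fm m a) (flim a) ≤ 1 * (2:ℝ)⁻¹ ^ m / (1 - 2⁻¹) := this
      _ = 2 * (2:ℝ)⁻¹ ^ m := by norm_num; ring
  have hpowto0 : Tendsto (fun m : ℕ => 2 * (2:ℝ)⁻¹ ^ m) atTop (nhds 0) := by
    have h2 := tendsto_pow_atTop_nhds_zero_of_lt_one (by norm_num : (0:ℝ) ≤ 2⁻¹)
      (by norm_num : (2:ℝ)⁻¹ < 1)
    simpa using h2.const_mul 2
  have hflimc : Continuous flim := by
    have huni : TendstoUniformly fm flim atTop := by
      rw [Metric.tendstoUniformly_iff]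
      intro ε hε
      have hev : ∀ᶠ m in atTop, 2 * (2:ℝ)⁻¹ ^ m < ε :=
        hpowto0.eventually_lt_const hε
      filter_upwards [hev] with m hm a
      calc dist (flim a) (fm m a) = dist (fm m a) (flim a) := dist_comm _ _
        _ ≤ 2 * (2:ℝ)⁻¹ ^ m := htail m a
        _ < ε := hm
    exact huni.continuous (Eventually.of_forall fun m => (seq m).2.1).frequently
  have hflimsel : ∀ a, flim a ∈ φ a := fun a =>
    (hcl a).mem_of_tendsto (hflim a) (Eventually.of_forall fun m => (seq m).2.2 a)
  have hflimbdd : Bornology.IsBounded (Set.range flim) := by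
    obtain ⟨R, hR⟩ := hgb.exists_norm_le
    rw [isBounded_iff_forall_norm_le]
    refine ⟨R + 2, ?_⟩
    rintro y ⟨a, rfl⟩
    have h1 : ‖g a‖ ≤ R := hR _ (mem_range_self a)
    have h2 : dist (g a) (flim a) ≤ 2 * (2:ℝ)⁻¹ ^ 0 := htail 0 a
    have h3 : ‖flim a‖ ≤ ‖g a‖ + ‖flim a - g a‖ := by
      have := norm_add_le (g a) (flim a - g a)
      simpa using this
    rw [dist_eq_norm, norm_sub_rev] at h2
    simp only [pow_zero, mul_one] at h2
    linarith
  -- points of `Em (n+1)` are frozen from stage `n+1` on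
  have hfreeze : ∀ n b, b ∈ Em (n+1) → ∀ m, n+1 ≤ m → fm m b = fm (n+1) b := by
    intro n b hb m hm
    induction m with
    | zero => omega
    | succ m ih =>
        rcases Nat.lt_or_ge (n+1) (m+1) with h | h
        · have hmn : n + 1 ≤ m := by omega
          have hb' : b ∈ Em m := hEmmono _ _ hmn hb
          have := hb2 m b hb' b
          simp only [dist_self, mul_zero] at this
          have hnorm0 : fm (m+1) b = fm m b := by
            have := norm_sub_eq_zero_iff.mp (le_antisymm this (norm_nonneg _))
            exact this
          rw [hnorm0, ih hmn]
        · have : m + 1 = n + 1 := by omega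
          rw [this]
  have hfreezelim : ∀ n b, b ∈ Em (n+1) → flim b = fm (n+1) b := by
    intro n b hb
    have hev : ∀ᶠ m in atTop, fm m b = fm (n+1) b :=
      eventually_atTop.mpr ⟨n+1, fun m hm => hfreeze n b hb m hm⟩
    have h1 : Tendsto (fun m => fm m b) atTop (nhds (fm (n+1) b)) :=
      Tendsto.congr' (hev.mono fun m hm => hm.symm) tendsto_const_nhds
    exact tendsto_nhds_unique (hflim b) h1
  -- weighted tail bound at frozen points
  have hwtail : ∀ n b, b ∈ Em (n+1) → ∀ a,
      dist (fm (n+1) a) (flim a) ≤ γ * dist a b := by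
    intro n b hb a
    have hsub : Tendsto (fun k => fm (n+1+k) a) atTop (nhds (flim a)) := by
      have h1 : Tendsto (fun k : ℕ => k + (n+1)) atTop atTop := tendsto_add_atTop_nat (n+1)
      have h2 := (hflim a).comp h1
      refine h2.congr fun k => ?_
      simp [Nat.add_comm]
    have hd : ∀ k, dist (fm (n+1+k) a) (fm (n+1+k+1) a)
        ≤ (γ/2 * (2:ℝ)⁻¹ ^ (n+1) * dist a b) * (2:ℝ)⁻¹ ^ k := by
      intro k
      have hbk : b ∈ Em (n+1+k) := hEmmono (n+1) (n+1+k) (by omega) hb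
      have := hb2 (n+1+k) b hbk a
      rw [dist_eq_norm, norm_sub_rev]
      calc ‖fm (n+1+k+1) a - fm (n+1+k) a‖ ≤ (γ/2 * (2:ℝ)⁻¹ ^ (n+1+k)) * dist a b := this
        _ = (γ/2 * (2:ℝ)⁻¹ ^ (n+1) * dist a b) * (2:ℝ)⁻¹ ^ k := by
            rw [pow_add]; ring
    have := dist_le_of_le_geometric_of_tendsto 2⁻¹
      (γ/2 * (2:ℝ)⁻¹ ^ (n+1) * dist a b) (by norm_num) hd hsub 0
    simp only [Nat.add_zero, pow_zero, mul_one] at this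
    have h2 : dist (fm (n+1) a) (flim a)
        ≤ γ/2 * (2:ℝ)⁻¹ ^ (n+1) * dist a b / (1 - 2⁻¹) := by simpa using this
    have h3 : γ/2 * (2:ℝ)⁻¹ ^ (n+1) * dist a b / (1 - 2⁻¹)
        = γ * (2:ℝ)⁻¹ ^ (n+1) * dist a b := by
      field_simp
      ring
    have hp1 : (2:ℝ)⁻¹ ^ (n+1) ≤ 1 := pow_le_one₀ (by norm_num) (by norm_num)
    have h4 : γ * (2:ℝ)⁻¹ ^ (n+1) * dist a b ≤ γ * dist a b := by
      nlinarith [mul_nonneg (mul_nonneg hγ0.le (dist_nonneg (x := a) (y := b)))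
        (sub_nonneg.mpr hp1)]
    exact (h2.trans h3.le).trans h4
  -- the dense set of Lipschitz points
  set B : Set M := ⋃ m, Em m with hBdef
  have hEmB : ∀ m, Em m ⊆ B := fun m => subset_iUnion Em m
  have hBdense : Dense B := by
    intro x
    rw [Metric.mem_closure_iff]
    intro ε hε
    obtain ⟨m, hm⟩ : ∃ m, 2 * (2:ℝ)⁻¹ ^ m < ε := by
      have := hpowto0.eventually_lt_const hε
      obtain ⟨m, hm⟩ := this.exists
      exact ⟨m, hm⟩
    by_cases hx : x ∈ closure (Em m)
    · obtain ⟨b, hb, hbd⟩ := Metric.mem_closure_iff.mp hx ε hε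
      exact ⟨b, hEmB m hb, hbd⟩
    · obtain ⟨b, hb, hbd⟩ := hbdense m x hx
      refine ⟨b, hEmB (m+1) ?_, lt_of_le_of_lt hbd hm⟩
      rw [hEmsucc m]
      exact Or.inr hb
  -- the pointwise Lipschitz estimate at points of B
  have hBlip : ∀ b ∈ B, ∃ ρ > 0, ∀ a ∈ closedBall b ρ,
      ‖flim a - flim b‖ ≤ β * dist a b := by
    intro b hb
    obtain ⟨m₀, hm₀⟩ := mem_iUnion.mp hb
    have hex : ∃ m, b ∈ Em m := ⟨m₀, hm₀⟩
    have hn₁mem : b ∈ Em (Nat.find hex) := Nat.find_spec hex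
    have hn₁pos : Nat.find hex ≠ 0 := by
      intro h0
      have hsp := Nat.find_spec hex
      rw [h0, hEm0] at hsp
      exact hsp
    obtain ⟨n, hn⟩ : ∃ n, Nat.find hex = n + 1 := ⟨Nat.find hex - 1, by omega⟩
    rw [hn] at hn₁mem
    have hnotE : b ∉ Em n := Nat.find_min hex (by omega)
    have hbN : b ∈ Nm n := by
      have := hEmsucc n ▸ hn₁mem
      rcases this with h | h
      · exact absurd h hnotE
      · exact h
    obtain ⟨hfb, ρ, hρ0, hball⟩ := hbnew n b hbN
    refine ⟨ρ, hρ0, fun a ha => ?_⟩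
    have hfrz : flim b = fm (n+1) b := hfreezelim n b hn₁mem
    have h1 : dist (fm (n+1) a) (flim a) ≤ γ * dist a b := hwtail n b hn₁mem a
    have h2 : ‖fm (n+1) a - fm (n+1) b‖ ≤ α * dist a b := hball a ha
    calc ‖flim a - flim b‖
        = ‖(flim a - fm (n+1) a) + (fm (n+1) a - fm (n+1) b)‖ := by
          rw [hfrz]; congr 1; abel
      _ ≤ ‖flim a - fm (n+1) a‖ + ‖fm (n+1) a - fm (n+1) b‖ := norm_add_le _ _
      _ ≤ γ * dist a b + α * dist a b := by
          apply add_le_add _ h2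
          rw [← dist_eq_norm, dist_comm]
          exact h1
      _ = β * dist a b := by rw [hγdef]; ring
  -- conclusion
  refine ⟨flim, hflimc, hflimsel, hflimbdd, B, hBdense, fun b hb => ?_⟩
  obtain ⟨ρ, hρ0, hlipb⟩ := hBlip b hb
  unfold PtwiseLipschitzAt
  refine Filter.limsup_le_of_le (by isBoundedDefault) ?_
  filter_upwards [Ioc_mem_nhdsGT_of_mem (show (0:ℝ) ∈ Ico (0:ℝ) ρ from ⟨le_refl _, hρ0⟩)]
    with r hr
  obtain ⟨hr0, hrρ⟩ := hr
  have hsup : (⨆ a ∈ closedBall b r, edist (flim b) (flim a)) ≤ ENNReal.ofReal (β * r) := by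
    refine iSup₂_le fun a ha => ?_
    rw [edist_dist]
    apply ENNReal.ofReal_le_ofReal
    have ha' : a ∈ closedBall b ρ := closedBall_subset_closedBall hrρ ha
    have hda : dist a b ≤ r := mem_closedBall.mp ha
    calc dist (flim b) (flim a) = ‖flim a - flim b‖ := by
          rw [dist_eq_norm, norm_sub_rev]
      _ ≤ β * dist a b := hlipb a ha'
      _ ≤ β * r := mul_le_mul_of_nonneg_left hda hβ0
  have hne0 : ENNReal.ofReal r ≠ 0 := by
    simp [ENNReal.ofReal_eq_zero, not_le, hr0]
  have hnetop : ENNReal.ofReal r ≠ ⊤ := ENNReal.ofReal_ne_top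
  calc (ENNReal.ofReal r)⁻¹ * ⨆ a ∈ closedBall b r, edist (flim b) (flim a)
      ≤ (ENNReal.ofReal r)⁻¹ * ENNReal.ofReal (β * r) := mul_le_mul_right hsup _
    _ = ENNReal.ofReal β := by
        rw [ENNReal.ofReal_mul hβ0, mul_comm (ENNReal.ofReal β), ← mul_assoc,
          ENNReal.inv_mul_cancel hne0 hnetop, one_mul]
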